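/- arXiv:1910.02835 — 2 statements merged into one kernel-verified Lean document; each statement's English description precedes it below -/
import Mathlib

section
/- For a finite state space, a state s ∉ S_F belongs to the viability kernel if and only if failure can be avoided for n steps, where n = |S|: that is, s ∈ S_V iff there exist actions a_0,...,a_{n−1} such that the induced trajectory s_0 = s, s_{i+1} = T(s_i, a_i) satisfies s_i ∉ S_F for all i ≤ n. -/
/-- The trajectory induced by deterministic dynamics `T`, start state `s0` and actions `act`. -/
def trajFrom {S A : Type*} (T : S → A → S) (s0 : S) (act : ℕ → A) : ℕ → S
  | 0 => s0
  | i + 1 => T (trajFrom T s0 act i) (act i)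

/-- A set `K` avoiding the failure set `SF` is viability-invariant if every state in `K`
admits an action keeping the system in `K`. -/
def ViabilityInvariant {S A : Type*} (T : S → A → S) (SF : Set S) (K : Set S) : Prop :=
  (∀ s ∈ K, s ∉ SF) ∧ ∀ s ∈ K, ∃ a, T s a ∈ K

/-- The viability kernel: the maximal viability-invariant subset of `S \ SF`. -/
def viabilityKernel {S A : Type*} (T : S → A → S) (SF : Set S) : Set S :=
  ⋃₀ {K | ViabilityInvariant T SF K}

lemma traj_shift {S A : Type*} (T : S → A → S) (s0 : S) (act : ℕ → A) (k : ℕ) :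
    trajFrom T (T s0 (act 0)) (fun i => act (i+1)) k = trajFrom T s0 act (k+1) := by
  induction k with
  | zero => rfl
  | succ k ih => simp [trajFrom, ih]

lemma lasso {S A : Type*} (T : S → A → S) (s : S) (act : ℕ → A) {i j : ℕ} (hij : i < j)
    (heq : trajFrom T s act i = trajFrom T s act j) :
    ∃ act' : ℕ → A, ∀ k, ∃ m < j, trajFrom T s act' k = trajFrom T s act m := by
  set f : ℕ → ℕ := fun k => if k < i then k else i + (k - i) % (j - i) with hf
  have hflt : ∀ k, f k < j := by
    intro k
    simp only [hf]
    split
    · omega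
    · have := Nat.mod_lt (k - i) (y := j - i) (by omega)
      omega
  refine ⟨fun k => act (f k), fun k => ⟨f k, hflt k, ?_⟩⟩
  induction k with
  | zero =>
    simp only [hf]
    split
    · rfl
    · have : i = 0 := by omega
      subst this
      simp [trajFrom]
  | succ k ih =>
    have key : trajFrom T s act (f k + 1) = trajFrom T s act (f (k+1)) := by
      rcases lt_trichotomy (k+1) i with h | h | h
      · simp only [hf]
        rw [if_pos (by omega), if_pos (by omega)]
      · simp only [hf]
        rw [if_pos (by omega), if_neg (by omega),
          show k + 1 - i = 0 from by omega, Nat.zero_mod,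
          show i + 0 = k + 1 from by omega]
      · have hki : ¬ k < i := by omega
        simp only [hf, if_neg hki, if_neg (by omega : ¬ k + 1 < i)]
        have hmod := Nat.mod_lt (k - i) (y := j - i) (by omega)
        have hstep : (k + 1 - i) % (j - i) = ((k - i) % (j - i) + 1) % (j - i) := by
          rw [Nat.mod_add_mod]
          congr 1
          omega
        rcases Nat.lt_or_ge ((k - i) % (j - i) + 1) (j - i) with hc | hc
        · congr 1
          rw [hstep, Nat.mod_eq_of_lt hc]
          omega
        · have h1 : (k - i) % (j - i) + 1 = j - i := by omega
          have h2 : (k + 1 - i) % (j - i) = 0 := by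
            rw [hstep, h1, Nat.mod_self]
          rw [h2]
          have h3 : i + (k - i) % (j - i) + 1 = j := by omega
          rw [h3]
          simpa using heq.symm
    have step : trajFrom T s (fun k => act (f k)) (k+1)
        = T (trajFrom T s act (f k)) (act (f k)) := by
      rw [trajFrom, ih]
    rw [step, ← key]
    rfl

/-- For a finite state space with `n = |S|`, a state `s ∉ S_F` is in the viability kernel
iff failure can be avoided for `n` steps: there are actions whose induced trajectory
`s_0 = s, s_{i+1} = T(s_i, a_i)` satisfies `s_i ∉ S_F` for all `i ≤ n`. -/
theorem mem_kernel_iff_avoid_card_steps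
    {S A : Type*} [Fintype S] (T : S → A → S) (SF : Set S) (s : S) (hs : s ∉ SF) :
    s ∈ viabilityKernel T SF ↔
      ∃ act : ℕ → A, ∀ i ≤ Fintype.card S, trajFrom T s act i ∉ SF := by
  constructor
  · rintro ⟨K, ⟨hK1, hK2⟩, hsK⟩
    choose g hg using hK2
    let seq : ℕ → {t // t ∈ K} := fun n =>
      Nat.rec ⟨s, hsK⟩ (fun _ p => ⟨T p.1 (g p.1 p.2), hg p.1 p.2⟩) n
    refine ⟨fun k => g (seq k).1 (seq k).2, ?_⟩
    have htraj : ∀ k, trajFrom T s (fun k => g (seq k).1 (seq k).2) k = (seq k).1 := by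
      intro k
      induction k with
      | zero => rfl
      | succ k ih =>
        show T (trajFrom T s _ k) _ = _
        rw [ih]
    intro i _
    rw [htraj]
    exact hK1 _ (seq i).2
  · rintro ⟨act, hact⟩
    obtain ⟨a, b, hab, heq⟩ := Fintype.exists_ne_map_eq_of_card_lt
      (fun k : Fin (Fintype.card S + 1) => trajFrom T s act k) (by simp)
    have main : ∀ (i j : ℕ), i < j → j ≤ Fintype.card S →
        trajFrom T s act i = trajFrom T s act j →
        s ∈ viabilityKernel T SF := by
      intro i j hij hjn heq'
      obtain ⟨act', hact'⟩ := lasso T s act hij heq'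
      have hforever : ∀ k, trajFrom T s act' k ∉ SF := by
        intro k
        obtain ⟨m, hm, e⟩ := hact' k
        rw [e]
        exact hact m (by omega)
      refine ⟨{t | ∃ a : ℕ → A, ∀ k, trajFrom T t a k ∉ SF}, ⟨?_, ?_⟩, ⟨act', hforever⟩⟩
      · rintro t ⟨a, ha⟩
        exact ha 0
      · rintro t ⟨a, ha⟩
        exact ⟨a 0, fun i => a (i+1), fun k => by rw [traj_shift]; exact ha (k+1)⟩
    rcases hab.lt_or_gt with h | h
    · exact main a b h (by omega) heq
    · exact main b a h (by omega) heq.symm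
end

section
/- If the initial estimate is optimistic, Λ̂⁰(s) ≥ Λ(s) for all s, and updates are Λ̂_Q(s,a) ← 0 on observed failure and Λ̂_Q(s,a) ← Λ̂(T(s,a)) otherwise (with Λ̂(s) = |{a : Λ̂_Q(s,a) > 0}|), then under infinite sampling of all state-action pairs the estimate Λ̂_Q converges to the true Λ_Q on all of S × A: after finitely many sweeps, Λ̂_Q(q) = 0 exactly on Q_V^c, and consequently Λ̂ = Λ and Λ̂_Q = Λ_Q everywhere. -/
/-- The safety measure: the (counting) measure of the viable actions at state `s`. -/
noncomputable def safetyMeasure {S A : Type*} (T : S → A → S) (SF : Set S) (s : S) : ℕ :=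
  {a : A | T s a ∈ viabilityKernel T SF}.ncard

/-- States that survive at least `k` steps. -/
private def Wset {S A : Type*} (T : S → A → S) (SF : Set S) : ℕ → Set S
  | 0 => SFᶜ
  | (k + 1) => {s | s ∉ SF ∧ ∃ a, T s a ∈ Wset T SF k}

private lemma Wset_succ {S A : Type*} (T : S → A → S) (SF : Set S) (k : ℕ) :
    Wset T SF (k + 1) = {s | s ∉ SF ∧ ∃ a, T s a ∈ Wset T SF k} := rfl

private lemma Wset_notSF {S A : Type*} (T : S → A → S) (SF : Set S) :
    ∀ k s, s ∈ Wset T SF k → s ∉ SF := by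
  rintro (_ | k) s hs
  · exact hs
  · exact hs.1

private lemma Wset_anti {S A : Type*} (T : S → A → S) (SF : Set S) :
    ∀ k, Wset T SF (k + 1) ⊆ Wset T SF k := by
  intro k
  induction k with
  | zero => exact fun s hs => hs.1
  | succ k ih => exact fun s hs => ⟨hs.1, hs.2.choose, ih hs.2.choose_spec⟩

private lemma kernel_notMem {S A : Type*} (T : S → A → S) (SF : Set S) :
    ∀ s ∈ viabilityKernel T SF, s ∉ SF := by
  rintro s ⟨K, hK, hsK⟩
  exact hK.1 s hsK

private lemma kernel_step {S A : Type*} (T : S → A → S) (SF : Set S) :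
    ∀ s ∈ viabilityKernel T SF, ∃ a, T s a ∈ viabilityKernel T SF := by
  rintro s ⟨K, hK, hsK⟩
  obtain ⟨a, ha⟩ := hK.2 s hsK
  exact ⟨a, K, hK, ha⟩

private lemma kernel_subset_Wset {S A : Type*} (T : S → A → S) (SF : Set S) :
    ∀ k, viabilityKernel T SF ⊆ Wset T SF k := by
  intro k
  induction k with
  | zero => exact fun s hs => kernel_notMem T SF s hs
  | succ k ih =>
    intro s hs
    obtain ⟨a, ha⟩ := kernel_step T SF s hs
    exact ⟨kernel_notMem T SF s hs, a, ih ha⟩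

/-- With an optimistic initialization (`Λ̂⁰_Q(q) > 0` for all viable `q`) and sweeps that
update every state-action pair (`0` on observed failure, `Λ̂(T(q))` otherwise, where
`Λ̂(s) = |{a : Λ̂_Q(s,a) > 0}|`), after finitely many sweeps `Λ̂_Q` vanishes exactly on the
complement of the viable set, `Λ̂ = Λ`, and `Λ̂_Q = Λ_Q` everywhere. (Failure states are
absorbing.) -/
theorem optimistic_estimate_converges
    {S A : Type*} [Fintype S] [Fintype A]
    (T : S → A → S) (SF : Set S) [DecidablePred (· ∈ SF)]
    (habs : ∀ s ∈ SF, ∀ a : A, T s a ∈ SF)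
    (Est : ℕ → S × A → ℕ)
    (hopt : ∀ q : S × A, T q.1 q.2 ∈ viabilityKernel T SF → Est 0 q ≠ 0)
    (hsweep : ∀ t (q : S × A), Est (t + 1) q =
      if T q.1 q.2 ∈ SF then 0
      else (Finset.univ.filter (fun a => Est t (T q.1 q.2, a) ≠ 0)).card) :
    ∃ N : ℕ, ∀ t, N ≤ t →
      (∀ q : S × A, (Est t q = 0 ↔ T q.1 q.2 ∉ viabilityKernel T SF)) ∧
      (∀ s : S, (Finset.univ.filter (fun a => Est t (s, a) ≠ 0)).card
        = safetyMeasure T SF s) ∧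
      (∀ q : S × A, Est t q = safetyMeasure T SF (T q.1 q.2)) := by
  classical
  -- the chain `Wset` stabilizes
  have hstab : ∃ N, Wset T SF (N + 1) = Wset T SF N := by
    by_contra h
    push_neg at h
    have hlt : ∀ n, (Wset T SF (n + 1)).ncard < (Wset T SF n).ncard := fun n =>
      Set.ncard_lt_ncard (HasSubset.Subset.ssubset_of_ne (Wset_anti T SF n) (h n))
        (Set.toFinite _)
    have hdec : ∀ n, (Wset T SF n).ncard + n ≤ (Wset T SF 0).ncard := by
      intro n
      induction n with
      | zero => simp
      | succ n ih => have := hlt n; omega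
    have := hdec ((Wset T SF 0).ncard + 1); omega
  obtain ⟨N, hN⟩ := hstab
  -- the stable set is the viability kernel
  have hWV : Wset T SF N = viabilityKernel T SF := by
    apply Set.Subset.antisymm
    · intro s hs
      refine ⟨Wset T SF N, ⟨fun s' hs' => Wset_notSF T SF N s' hs', fun s' hs' => ?_⟩, hs⟩
      have hs'' : s' ∈ Wset T SF (N + 1) := hN ▸ hs'
      exact hs''.2
    · exact kernel_subset_Wset T SF N
  have hWstab : ∀ k, N ≤ k → Wset T SF k = Wset T SF N := by
    have key : ∀ k, Wset T SF (N + k) = Wset T SF N := by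
      intro k
      induction k with
      | zero => rfl
      | succ k ih =>
        calc Wset T SF (N + k + 1) = {s | s ∉ SF ∧ ∃ a, T s a ∈ Wset T SF (N + k)} := rfl
          _ = {s | s ∉ SF ∧ ∃ a, T s a ∈ Wset T SF N} := by rw [ih]
          _ = Wset T SF (N + 1) := rfl
          _ = Wset T SF N := hN
    intro k hk
    have : N + (k - N) = k := by omega
    rw [← this]; exact key _
  -- optimism is preserved
  have pos : ∀ t (q : S × A), T q.1 q.2 ∈ viabilityKernel T SF → Est t q ≠ 0 := by
    intro t
    induction t with
    | zero => exact hopt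
    | succ t ih =>
      intro q hq
      rw [hsweep, if_neg (kernel_notMem T SF _ hq)]
      obtain ⟨a, ha⟩ := kernel_step T SF _ hq
      have hmem : a ∈ Finset.univ.filter (fun a => Est t (T q.1 q.2, a) ≠ 0) := by
        simp only [Finset.mem_filter, Finset.mem_univ, true_and]
        exact ih (T q.1 q.2, a) ha
      exact Finset.card_ne_zero_of_mem hmem
  -- non-viable pairs zero out
  have zer : ∀ t (q : S × A), T q.1 q.2 ∉ Wset T SF t → Est (t + 1) q = 0 := by
    intro t
    induction t with
    | zero =>
      intro q hq
      rw [hsweep, if_pos (by simpa [Wset] using hq)]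
    | succ t ih =>
      intro q hq
      rw [hsweep]
      by_cases hf : T q.1 q.2 ∈ SF
      · rw [if_pos hf]
      · rw [if_neg hf, Finset.card_eq_zero, Finset.filter_eq_empty_iff]
        intro a _
        simp only [ne_eq, not_not]
        apply ih
        intro hW
        exact hq ⟨hf, a, hW⟩
  have part1 : ∀ t, N + 1 ≤ t →
      ∀ q : S × A, (Est t q = 0 ↔ T q.1 q.2 ∉ viabilityKernel T SF) := by
    intro t ht q
    obtain ⟨u, rfl⟩ : ∃ u, t = u + 1 := ⟨t - 1, by omega⟩
    constructor
    · intro h0 hV; exact pos _ q hV h0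
    · intro hV
      apply zer
      rw [hWstab u (by omega), hWV]
      exact hV
  have part2 : ∀ t, N + 1 ≤ t → ∀ s : S,
      (Finset.univ.filter (fun a => Est t (s, a) ≠ 0)).card = safetyMeasure T SF s := by
    intro t ht s
    have hset : {a : A | T s a ∈ viabilityKernel T SF}
        = ↑(Finset.univ.filter (fun a => Est t (s, a) ≠ 0)) := by
      ext a
      simp only [Finset.coe_filter, Set.mem_setOf_eq, Finset.mem_univ, true_and, ne_eq]
      rw [part1 t ht (s, a)]
      simp
    rw [safetyMeasure, hset, Set.ncard_coe_finset]
  have part3 : ∀ t, N + 2 ≤ t →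
      ∀ q : S × A, Est t q = safetyMeasure T SF (T q.1 q.2) := by
    intro t ht q
    obtain ⟨u, rfl⟩ : ∃ u, t = u + 1 := ⟨t - 1, by omega⟩
    rw [hsweep]
    by_cases hf : T q.1 q.2 ∈ SF
    · rw [if_pos hf]
      symm
      rw [safetyMeasure, Set.ncard_eq_zero (Set.toFinite _)]
      ext a
      simp only [Set.mem_setOf_eq, Set.mem_empty_iff_false, iff_false]
      exact fun hV => kernel_notMem T SF _ hV (habs _ hf a)
    · rw [if_neg hf]
      exact part2 u (by omega) _
  exact ⟨N + 2, fun t ht => ⟨part1 t (by omega), part2 t (by omega), part3 t ht⟩⟩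
end
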